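/- arXiv:1609.06901 — 4 statements merged into one kernel-verified Lean document; each statement's English description precedes it below -/
import Mathlib

section
/- Let M be the free metabelian Lie algebra on an ordered finite set X = {x_1 < x_2 < … < x_d} over a field k. Then the set of left-normed monomials [a_0, a_1, …, a_{n-1}] with a_i ∈ X, n ≥ 1, satisfying a_0 > a_1 ≤ a_2 ≤ … ≤ a_{n-1} (together with the elements of X themselves, for n = 1) forms a k-vector-space basis of M. -/
open FreeLieAlgebra

/-- The left-normed bracket `[a₀, a₁, …, a_{n-1}]` of a nonempty list, i.e.
`[[…[[a₀,a₁],a₂]…], a_{n-1}]`; defined as `0` on the empty list. -/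
def leftNormedList {L : Type*} [LieRing L] : List L → L
  | [] => 0
  | a :: rest => rest.foldl (fun x y => ⁅x, y⁆) a

/-- The admissibility condition of Bokut's basis: the list `[a₀, a₁, …, a_{n-1}]`
is nonempty, its tail is nondecreasing, and if it has length at least 2 then
`a₁ < a₀`. -/
def BokutAdmissible {d : ℕ} (l : List (Fin d)) : Prop :=
  l ≠ [] ∧ List.Chain' (· ≤ ·) l.tail ∧
    ∀ (h : 2 ≤ l.length), l.get ⟨1, by omega⟩ < l.get ⟨0, by omega⟩

namespace FMB

open MvPolynomial


variable (k : Type*) [Field k] (d : ℕ)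

abbrev E := (Fin d → k) × (Fin d → MvPolynomial (Fin d) k)

variable {k d}

/-- linear polynomial associated to a vector -/
noncomputable def ell (v : Fin d → k) : MvPolynomial (Fin d) k := ∑ j, C (v j) * X j

lemma ell_add (v w : Fin d → k) : ell (v + w) = ell v + ell w := by
  simp [ell, add_mul, Finset.sum_add_distrib]

lemma ell_smul (t : k) (v : Fin d → k) : ell (t • v) = C t * ell v := by
  simp [ell, Finset.mul_sum, mul_assoc]

lemma ell_zero : ell (0 : Fin d → k) = 0 := by simp [ell]

lemma ell_single (a : Fin d) : ell (Pi.single a (1:k)) = X a := by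
  rw [ell, Finset.sum_eq_single a] <;> simp +contextual [Pi.single_apply]

/-- bracket on the model -/
noncomputable def brk (x y : E k d) : E k d :=
  (0, fun i => (C (x.1 i) + x.2 i) * ell y.1 - (C (y.1 i) + y.2 i) * ell x.1)

noncomputable instance : LieRing (E k d) :=
  { (inferInstance : AddCommGroup (E k d)) with
    bracket := brk
    add_lie := fun x y z => by
      refine Prod.ext (by simp [brk]) (funext fun i => ?_)
      simp only [brk, Prod.fst_add, Prod.snd_add, Pi.add_apply, ell_add, map_add]
      ring
    lie_add := fun x y z => by
      refine Prod.ext (by simp [brk]) (funext fun i => ?_)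
      simp only [brk, Prod.fst_add, Prod.snd_add, Pi.add_apply, ell_add, map_add]
      ring
    lie_self := fun x => by
      refine Prod.ext (by simp [brk]) (funext fun i => ?_)
      simp only [brk, Prod.fst_zero, Prod.snd_zero, Pi.zero_apply]
      ring
    leibniz_lie := fun x y z => by
      refine Prod.ext (by simp [brk]) (funext fun i => ?_)
      simp only [brk, Prod.fst_add, Prod.snd_add, Pi.add_apply, Pi.zero_apply, ell_zero, map_zero]
      ring }

lemma brk_def (x y : E k d) : ⁅x, y⁆ = brk x y := rfl

noncomputable instance : LieAlgebra k (E k d) :=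
  { lie_smul := fun t x y => by
      refine Prod.ext (by simp [brk_def, brk]) (funext fun i => ?_)
      simp only [brk_def, brk, Prod.smul_fst, Prod.smul_snd, Pi.smul_apply, ell_smul,
        smul_eq_C_mul, smul_eq_mul, map_mul]
      ring }

-- metabelian-ness of E
lemma brk_fst (x y : E k d) : (⁅x, y⁆ : E k d).1 = 0 := by rw [brk_def]; rfl

lemma brk_of_fst_zero (x y : E k d) (hx : x.1 = 0) (hy : y.1 = 0) : ⁅x, y⁆ = 0 := by
  rw [brk_def, brk, hx, hy]
  have : ell (0 : Fin d → k) = 0 := by simp [ell]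
  refine Prod.ext rfl (funext fun i => ?_)
  simp [this]

/-- the ideal of elements with vanishing linear part -/
noncomputable def K : LieIdeal k (E k d) where
  carrier := {x | x.1 = 0}
  add_mem' := by intro a b ha hb; simp_all [Set.mem_setOf_eq, Prod.fst_add, ha, hb]
  zero_mem' := rfl
  smul_mem' := by intro t x hx; simp_all [Set.mem_setOf_eq]
  lie_mem := by intro x m _; exact brk_fst x m

lemma derivedSeries_E_two : LieAlgebra.derivedSeries k (E k d) 2 = ⊥ := by
  have h1 : LieAlgebra.derivedSeries k (E k d) 1 ≤ K := by
    rw [LieAlgebra.derivedSeries_def, LieAlgebra.derivedSeriesOfIdeal_succ,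
      LieAlgebra.derivedSeriesOfIdeal_zero, LieSubmodule.lieIdeal_oper_eq_span,
      LieSubmodule.lieSpan_le]
    rintro x ⟨y, z, h⟩
    rw [← h]
    show (⁅(y:E k d), (z:E k d)⁆ : E k d).1 = 0
    exact brk_fst _ _
  have h2 : LieAlgebra.derivedSeries k (E k d) 2 ≤ ⊥ := by
    rw [show (2:ℕ) = 1 + 1 from rfl, LieAlgebra.derivedSeries_def,
      LieAlgebra.derivedSeriesOfIdeal_succ, ← LieAlgebra.derivedSeries_def,
      LieSubmodule.lieIdeal_oper_eq_span, LieSubmodule.lieSpan_le]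
    rintro x ⟨⟨y, hy⟩, ⟨z, hz⟩, h⟩
    rw [← h]
    have := brk_of_fst_zero y z (h1 hy) (h1 hz)
    simp [this]
  exact le_bot_iff.mp h2

variable (k d) in
/-- the canonical hom from the free Lie algebra to the model -/
noncomputable def phi : FreeLieAlgebra k (Fin d) →ₗ⁅k⁆ E k d :=
  FreeLieAlgebra.lift k fun a => (Pi.single a 1, 0)

lemma phi_ker : (LieAlgebra.derivedSeries k (FreeLieAlgebra k (Fin d)) 2).toSubmodule ≤
    LinearMap.ker (phi k d).toLinearMap := by
  intro x hx
  have : phi k d x ∈ (LieAlgebra.derivedSeries k (FreeLieAlgebra k (Fin d)) 2).map (phi k d) :=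
    LieIdeal.mem_map hx
  have h2 := LieIdeal.derivedSeries_map_le (f := phi k d) 2
  have := h2 this
  rw [derivedSeries_E_two] at this
  simpa using this


/-! ### computations of monomial images -/

variable (k d) in
abbrev Mq := FreeLieAlgebra k (Fin d) ⧸ LieAlgebra.derivedSeries k (FreeLieAlgebra k (Fin d)) 2

variable (k d) in
noncomputable def psi : Mq k d →ₗ[k] E k d :=
  Submodule.liftQ _ (phi k d).toLinearMap phi_ker

lemma psi_mk (x : FreeLieAlgebra k (Fin d)) :
    psi k d (LieSubmodule.Quotient.mk
      (N := LieAlgebra.derivedSeries k (FreeLieAlgebra k (Fin d)) 2) x) = phi k d x := rfl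

lemma lieHom_foldl {L L' : Type*} [LieRing L] [LieAlgebra k L] [LieRing L'] [LieAlgebra k L']
    (f : L →ₗ⁅k⁆ L') (t : List L) (x : L) :
    f (t.foldl (fun a b => ⁅a, b⁆) x) = (t.map f).foldl (fun a b => ⁅a, b⁆) (f x) := by
  induction t generalizing x with
  | nil => rfl
  | cons c t ih => simp [ih, LieHom.map_lie]

/-- exponent finsupp of a list -/
noncomputable def exps (s : List (Fin d)) : Fin d →₀ ℕ := (s.map fun a => Finsupp.single a 1).sum

variable (k) in
/-- the monomial of a list -/
noncomputable def mon (s : List (Fin d)) : MvPolynomial (Fin d) k := monomial (exps s) 1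

lemma exps_nil : exps ([] : List (Fin d)) = 0 := rfl

lemma exps_cons (a : Fin d) (s : List (Fin d)) :
    exps (a :: s) = Finsupp.single a 1 + exps s := by simp [exps]

lemma mon_cons (a : Fin d) (s : List (Fin d)) : mon k (a :: s) = X a * mon k s := by
  rw [mon, mon, exps_cons, X, monomial_mul, one_mul]

lemma exps_apply (s : List (Fin d)) (j : Fin d) : exps s j = s.count j := by
  induction s with
  | nil => simp [exps_nil]
  | cons a s ih =>
    rw [exps_cons, Finsupp.add_apply, ih, List.count_cons, Finsupp.single_apply]
    by_cases h : a = j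
    · subst h; simp [add_comm]
    · simp [h, Ne.symm h]

lemma exps_eq_iff {s s' : List (Fin d)} : exps s = exps s' ↔ s.Perm s' := by
  rw [List.perm_iff_count]
  constructor
  · intro h j; rw [← exps_apply, ← exps_apply, h]
  · intro h; ext j; rw [exps_apply, exps_apply]; exact h j

variable (k) in
noncomputable def gen (a : Fin d) : E k d := (Pi.single a 1, 0)

lemma phi_of (a : Fin d) : phi k d (of k a) = gen k a := by
  simp [phi, gen]

lemma brk_gen_gen (a b : Fin d) :
    (⁅gen k a, gen k b⁆ : E k d) =
      (0, fun i => C ((Pi.single a 1 : Fin d → k) i) * X b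
        - C ((Pi.single b 1 : Fin d → k) i) * X a) := by
  rw [brk_def, brk]
  refine Prod.ext rfl (funext fun i => ?_)
  simp [gen, ell_single]

lemma foldl_gen (t : List (Fin d)) (p : Fin d → MvPolynomial (Fin d) k) :
    ((t.map (gen k)).foldl (fun a b => ⁅a, b⁆) (0, p) : E k d)
      = (0, fun i => p i * mon k t) := by
  induction t generalizing p with
  | nil =>
    refine Prod.ext rfl (funext fun i => ?_)
    show p i = p i * mon k []
    rw [mon, exps_nil, monomial_zero', map_one, mul_one]
  | cons c t ih =>
    rw [List.map_cons, List.foldl_cons]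
    have hb : (⁅((0, p) : E k d), gen k c⁆ : E k d) = (0, fun i => p i * X c) := by
      rw [brk_def, brk]
      refine Prod.ext rfl (funext fun i => ?_)
      simp [gen, ell_single, ell_zero]
    rw [hb, ih]
    refine Prod.ext rfl (funext fun i => ?_)
    simp [mon_cons]
    ring

lemma phi_LN_long (a b : Fin d) (t : List (Fin d)) :
    phi k d (leftNormedList ((a :: b :: t).map (of k)))
      = (0, fun i => C ((Pi.single a 1 : Fin d → k) i) * mon k (b :: t)
          - C ((Pi.single b 1 : Fin d → k) i) * mon k (a :: t)) := by
  rw [List.map_cons, leftNormedList, List.map_cons, List.foldl_cons]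
  rw [lieHom_foldl, LieHom.map_lie, phi_of, phi_of, brk_gen_gen]
  have : (t.map (of k)).map (phi k d) = t.map (gen k) := by
    simp [List.map_map, Function.comp_def, phi_of]
  rw [this, foldl_gen]
  refine Prod.ext rfl (funext fun i => ?_)
  simp only [sub_mul, mon_cons]
  ring

lemma phi_LN_single (a : Fin d) :
    phi k d (leftNormedList ([a].map (of k))) = gen k a := by
  simp [leftNormedList, phi_of]


/-! ### linear independence -/


lemma adm_cons_cons {a b : Fin d} {t : List (Fin d)} (h : BokutAdmissible (a :: b :: t)) :
    b < a ∧ List.Pairwise (· ≤ ·) (b :: t) := by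
  refine ⟨h.2.2 (by simp), ?_⟩
  have := h.2.1
  simpa using List.isChain_iff_pairwise.mp this

variable (k) in
noncomputable def coeffE (i : Fin d) (m : Fin d →₀ ℕ) : E k d →ₗ[k] k where
  toFun x := coeff m (x.2 i)
  map_add' x y := by
    show coeff m ((x.2 + y.2) i) = _
    simp [coeff_add]
  map_smul' t x := by
    show coeff m ((t • x.2) i) = t * coeff m (x.2 i)
    simp [coeff_smul]

variable (k) in
noncomputable def evalE (a : Fin d) : E k d →ₗ[k] k where
  toFun x := x.1 a
  map_add' x y := rfl
  map_smul' t x := rfl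

variable (k) in
noncomputable def Fl : List (Fin d) → (E k d →ₗ[k] k)
  | [] => 0
  | [a] => evalE k a
  | a :: b :: t => coeffE k a (exps (b :: t))

variable (k) in
noncomputable def uu (l : List (Fin d)) : E k d := phi k d (leftNormedList (l.map (of k)))

lemma uu_single (a : Fin d) : uu k [a] = gen k a := phi_LN_single a

lemma uu_long (a b : Fin d) (t : List (Fin d)) :
    uu k (a :: b :: t) = (0, fun i => C ((Pi.single a 1 : Fin d → k) i) * mon k (b :: t)
          - C ((Pi.single b 1 : Fin d → k) i) * mon k (a :: t)) := phi_LN_long a b t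

lemma Fl_uu {l l' : List (Fin d)} (hl : BokutAdmissible l) (hl' : BokutAdmissible l') :
    Fl k l (uu k l') = if l = l' then 1 else 0 := by
  rcases l with _ | ⟨a, _ | ⟨b, t⟩⟩
  · exact absurd rfl hl.1
  · rcases l' with _ | ⟨c, _ | ⟨e, t'⟩⟩
    · exact absurd rfl hl'.1
    · rw [uu_single]
      show (Pi.single c (1:k) : Fin d → k) a = _
      rw [Pi.single_apply]
      by_cases h : a = c
      · subst h; rw [if_pos rfl, if_pos rfl]
      · rw [if_neg h, if_neg (by simp [h])]
    · rw [uu_long]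
      show (0 : Fin d → k) a = _
      rw [if_neg (by simp)]
      rfl
  · obtain ⟨hba, hsort⟩ := adm_cons_cons hl
    rcases l' with _ | ⟨a', _ | ⟨b', t'⟩⟩
    · exact absurd rfl hl'.1
    · rw [uu_single]
      show coeff (exps (b :: t)) ((gen k a').2 a) = _
      rw [if_neg (by simp)]
      simp [gen]
    · obtain ⟨hba', hsort'⟩ := adm_cons_cons hl'
      rw [uu_long]
      show coeff (exps (b :: t)) (C ((Pi.single a' 1 : Fin d → k) a) * mon k (b' :: t')
        - C ((Pi.single b' 1 : Fin d → k) a) * mon k (a' :: t')) = _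
      rw [coeff_sub, coeff_C_mul, coeff_C_mul, mon, mon, coeff_monomial, coeff_monomial]
      have hB : ¬ (exps (a' :: t') = exps (b :: t) ∧ b' = a) := by
        rintro ⟨hperm, rfl⟩
        have hmem : b ∈ a' :: t' := ((exps_eq_iff.mp hperm).mem_iff (a := b)).mpr (by simp)
        have hall : ∀ x ∈ a' :: t', b' ≤ x := by
          intro x hx
          rcases List.mem_cons.mp hx with rfl | hx
          · exact le_of_lt hba'
          · exact (List.pairwise_cons.mp hsort').1 x hx
        exact absurd (hall b hmem) (not_le.mpr hba)
      have hzero : (Pi.single b' (1:k) : Fin d → k) a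
          * (if exps (a' :: t') = exps (b :: t) then (1:k) else 0) = 0 := by
        by_cases he : exps (a' :: t') = exps (b :: t)
        · rw [if_pos he, mul_one, Pi.single_apply,
            if_neg (fun h => hB ⟨he, h.symm⟩)]
        · rw [if_neg he, mul_zero]
      rw [hzero, sub_zero]
      by_cases h1 : a' = a ∧ exps (b' :: t') = exps (b :: t)
      · obtain ⟨rfl, hperm⟩ := h1
        have heq : (b' :: t') = (b :: t) :=
          List.Perm.eq_of_pairwise' hsort' hsort (exps_eq_iff.mp hperm)
        rw [if_pos hperm, mul_one, Pi.single_eq_same, if_pos (by rw [heq])]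
      · have hne : (a :: b :: t) ≠ (a' :: b' :: t') := by
          intro h
          rw [List.cons_eq_cons] at h
          exact h1 ⟨h.1.symm, by rw [h.2]⟩
        rw [if_neg hne]
        by_cases ha : a' = a
        · have he : exps (b' :: t') ≠ exps (b :: t) := fun he => h1 ⟨ha, he⟩
          rw [if_neg he, mul_zero]
        · rw [Pi.single_eq_of_ne (fun h => ha h.symm), zero_mul]

variable (k) in
noncomputable def vv (l : List (Fin d)) : Mq k d :=
  LieSubmodule.Quotient.mk (N := LieAlgebra.derivedSeries k (FreeLieAlgebra k (Fin d)) 2)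
    (leftNormedList (l.map (of k)))

lemma psi_vv (l : List (Fin d)) : psi k d (vv k l) = uu k l := rfl

variable (k d) in
noncomputable def AdmT := {l : List (Fin d) // BokutAdmissible l}

lemma indep_uu : LinearIndependent k (fun l : {l : List (Fin d) // BokutAdmissible l} => uu k l.1) := by
  rw [linearIndependent_iff']
  intro s g hsum l hls
  have h := congrArg (Fl k l.1) hsum
  rw [map_sum, map_zero] at h
  rw [Finset.sum_eq_single l (fun i _ hil => ?_) (fun h' => absurd hls h')] at h
  · rw [map_smul, Fl_uu l.2 l.2, if_pos rfl, smul_eq_mul, mul_one] at h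
    exact h
  · rw [map_smul, Fl_uu l.2 i.2, if_neg (fun he => hil (Subtype.ext he.symm)),
      smul_eq_mul, mul_zero]

lemma indep_vv : LinearIndependent k
    (fun l : {l : List (Fin d) // BokutAdmissible l} => vv k l.1) :=
  LinearIndependent.of_comp (psi k d) indep_uu

/-! ### spanning -/

variable (k d) in
noncomputable abbrev D1 := LieAlgebra.derivedSeries k (FreeLieAlgebra k (Fin d)) 1
variable (k d) in
noncomputable abbrev D2 := LieAlgebra.derivedSeries k (FreeLieAlgebra k (Fin d)) 2

lemma bracket_mem_D1 (x y : FreeLieAlgebra k (Fin d)) : ⁅x, y⁆ ∈ D1 k d := by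
  show ⁅x, y⁆ ∈ LieAlgebra.derivedSeries k (FreeLieAlgebra k (Fin d)) 1
  rw [LieAlgebra.derivedSeries_def, LieAlgebra.derivedSeriesOfIdeal_succ,
    LieAlgebra.derivedSeriesOfIdeal_zero]
  exact LieSubmodule.lie_mem_lie (LieSubmodule.mem_top x) (LieSubmodule.mem_top y)

lemma D1_lie_mem {x : FreeLieAlgebra k (Fin d)} (hx : x ∈ D1 k d)
    (y : FreeLieAlgebra k (Fin d)) : ⁅x, y⁆ ∈ D1 k d := by
  rw [← lie_skew]
  exact neg_mem ((D1 k d).lie_mem hx)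

lemma mem_D2 {x y : FreeLieAlgebra k (Fin d)} (hx : x ∈ D1 k d) (hy : y ∈ D1 k d) :
    ⁅x, y⁆ ∈ D2 k d := by
  show ⁅x, y⁆ ∈ LieAlgebra.derivedSeries k (FreeLieAlgebra k (Fin d)) 2
  rw [show (2:ℕ) = 1 + 1 from rfl, LieAlgebra.derivedSeries_def,
    LieAlgebra.derivedSeriesOfIdeal_succ, ← LieAlgebra.derivedSeries_def]
  exact LieSubmodule.lie_mem_lie hx hy

lemma D2_lie_mem {x : FreeLieAlgebra k (Fin d)} (hx : x ∈ D2 k d)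
    (y : FreeLieAlgebra k (Fin d)) : ⁅x, y⁆ ∈ D2 k d := by
  rw [← lie_skew]
  exact neg_mem ((D2 k d).lie_mem hx)

lemma foldl_mem_D1 {x : FreeLieAlgebra k (Fin d)} (hx : x ∈ D1 k d)
    (t : List (FreeLieAlgebra k (Fin d))) :
    t.foldl (fun a b => ⁅a, b⁆) x ∈ D1 k d := by
  induction t generalizing x with
  | nil => exact hx
  | cons c t ih => exact ih (D1_lie_mem hx c)

lemma foldl_sub_mem_D2 {x y : FreeLieAlgebra k (Fin d)} (h : x - y ∈ D2 k d)
    (t : List (FreeLieAlgebra k (Fin d))) :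
    t.foldl (fun a b => ⁅a, b⁆) x - t.foldl (fun a b => ⁅a, b⁆) y ∈ D2 k d := by
  induction t generalizing x y with
  | nil => exact h
  | cons c t ih =>
    refine ih ?_
    rw [← sub_lie]
    exact D2_lie_mem h c

lemma foldl_perm_sub_mem_D2 {t t' : List (FreeLieAlgebra k (Fin d))} (hp : t.Perm t')
    {x : FreeLieAlgebra k (Fin d)} (hx : x ∈ D1 k d) :
    t.foldl (fun a b => ⁅a, b⁆) x - t'.foldl (fun a b => ⁅a, b⁆) x ∈ D2 k d := by
  induction hp generalizing x with
  | nil => simpa using (D2 k d).zero_mem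
  | cons c p ih => exact ih (D1_lie_mem hx c)
  | swap c e t0 =>
    refine foldl_sub_mem_D2 ?_ t0
    have hswap : ⁅⁅x, e⁆, c⁆ - ⁅⁅x, c⁆, e⁆ = ⁅x, ⁅e, c⁆⁆ := by
      rw [lie_lie x e c, ← lie_skew ⁅x,c⁆ e]
      abel
    rw [show (fun a b : FreeLieAlgebra k (Fin d) => ⁅a, b⁆) = fun a b => ⁅a, b⁆ from rfl]
    rw [hswap]
    exact mem_D2 hx (bracket_mem_D1 e c)
  | trans p1 p2 ih1 ih2 =>
    have := add_mem (ih1 hx) (ih2 hx)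
    simpa using this

lemma foldl_neg (x : FreeLieAlgebra k (Fin d)) (t : List (FreeLieAlgebra k (Fin d))) :
    t.foldl (fun a b => ⁅a, b⁆) (-x) = - t.foldl (fun a b => ⁅a, b⁆) x := by
  induction t generalizing x with
  | nil => rfl
  | cons c t ih => rw [List.foldl_cons, List.foldl_cons, neg_lie, ih]

lemma foldl_sub (x y : FreeLieAlgebra k (Fin d)) (t : List (FreeLieAlgebra k (Fin d))) :
    t.foldl (fun a b => ⁅a, b⁆) (x - y)
      = t.foldl (fun a b => ⁅a, b⁆) x - t.foldl (fun a b => ⁅a, b⁆) y := by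
  induction t generalizing x y with
  | nil => rfl
  | cons c t ih => rw [List.foldl_cons, List.foldl_cons, List.foldl_cons, sub_lie, ih]

lemma foldl_zero_lie (t : List (FreeLieAlgebra k (Fin d))) :
    t.foldl (fun a b => ⁅a, b⁆) 0 = 0 := by
  induction t with
  | nil => rfl
  | cons c t ih => rw [List.foldl_cons, zero_lie]; exact ih

variable (k d) in
noncomputable def SS : Submodule k (Mq k d) :=
  Submodule.span k (Set.range (fun l : {l : List (Fin d) // BokutAdmissible l} => vv k l.1))

lemma vv_mem_SS_of_adm {l : List (Fin d)} (h : BokutAdmissible l) : vv k l ∈ SS k d :=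
  Submodule.subset_span ⟨⟨l, h⟩, rfl⟩

lemma vv_eq_of_sub_mem {x y : FreeLieAlgebra k (Fin d)} (h : x - y ∈ D2 k d) :
    (LieSubmodule.Quotient.mk (N := D2 k d) x : Mq k d)
      = LieSubmodule.Quotient.mk (N := D2 k d) y :=
  (Submodule.Quotient.eq _).mpr h

lemma vv_cons_cons (a b : Fin d) (t : List (Fin d)) :
    vv k (a :: b :: t) = LieSubmodule.Quotient.mk (N := D2 k d)
      ((t.map (of k)).foldl (fun x y => ⁅x, y⁆) ⁅of k a, of k b⁆) := rfl

lemma vv_tail_perm (a b : Fin d) {t t' : List (Fin d)} (hp : t.Perm t') :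
    vv k (a :: b :: t) = vv k (a :: b :: t') := by
  rw [vv_cons_cons, vv_cons_cons]
  exact vv_eq_of_sub_mem (foldl_perm_sub_mem_D2 (hp.map (of k)) (bracket_mem_D1 _ _))

lemma vv_mem_of {a c : Fin d} {s : List (Fin d)} (h1 : c < a) (h2 : ∀ x ∈ s, c ≤ x) :
    vv k (a :: c :: s) ∈ SS k d := by
  classical
  set s' := s.insertionSort (· ≤ ·) with hs'
  have hperm : s.Perm s' := (s.perm_insertionSort (· ≤ ·)).symm
  rw [vv_tail_perm a c hperm]
  refine vv_mem_SS_of_adm ⟨by simp, ?_, ?_⟩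
  · show List.Chain' (· ≤ ·) (c :: s')
    rw [List.Chain', List.isChain_iff_pairwise]
    refine List.pairwise_cons.mpr ⟨fun x hx => h2 x (hperm.mem_iff.mpr hx), ?_⟩
    exact s.pairwise_insertionSort (· ≤ ·)
  · intro _
    simpa using h1

lemma span_key_lt {a b : Fin d} (hba : b < a) (t : List (Fin d)) :
    vv k (a :: b :: t) ∈ SS k d := by
  classical
  set ts := t.insertionSort (· ≤ ·) with hts
  have hperm : t.Perm ts := (t.perm_insertionSort (· ≤ ·)).symm
  have hsorted : List.Pairwise (· ≤ ·) ts := t.pairwise_insertionSort (· ≤ ·)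
  rw [vv_tail_perm a b hperm]
  match ts, hsorted with
  | [], _ => exact vv_mem_of hba (by simp)
  | c :: t2, hsorted =>
    by_cases hbc : b ≤ c
    · refine vv_mem_of hba ?_
      intro x hx
      rcases List.mem_cons.mp hx with rfl | hx
      · exact hbc
      · exact le_trans hbc ((List.pairwise_cons.mp hsorted).1 x hx)
    · push_neg at hbc
      have hkey : vv k (a :: b :: c :: t2)
          = vv k (a :: c :: b :: t2) - vv k (b :: c :: a :: t2) := by
        rw [vv_cons_cons, vv_cons_cons, vv_cons_cons]
        rw [List.map_cons, List.foldl_cons]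
        have hjac : (⁅⁅of k a, of k b⁆, of k c⁆ : FreeLieAlgebra k (Fin d))
            = ⁅⁅of k a, of k c⁆, of k b⁆ - ⁅⁅of k b, of k c⁆, of k a⁆ := by
          rw [lie_lie (of k a) (of k b) (of k c), ← lie_skew ⁅of k a, of k c⁆ (of k b),
            ← lie_skew ⁅of k b, of k c⁆ (of k a)]
          abel
        rw [hjac, foldl_sub]
        rfl
      rw [hkey]
      have hct2 : ∀ x ∈ t2, c ≤ x := (List.pairwise_cons.mp hsorted).1
      refine sub_mem ?_ ?_
      · refine vv_mem_of (lt_trans hbc hba) ?_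
        intro x hx
        rcases List.mem_cons.mp hx with rfl | hx
        · exact le_of_lt hbc
        · exact hct2 x hx
      · refine vv_mem_of hbc ?_
        intro x hx
        rcases List.mem_cons.mp hx with rfl | hx
        · exact le_of_lt (lt_trans hbc hba)
        · exact hct2 x hx

lemma span_key (a b : Fin d) (t : List (Fin d)) : vv k (a :: b :: t) ∈ SS k d := by
  rcases lt_trichotomy b a with h | h | h
  · exact span_key_lt h t
  · subst h
    have : vv k (b :: b :: t) = 0 := by
      rw [vv_cons_cons, lie_self, foldl_zero_lie]
      rfl
    rw [this]; exact zero_mem _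
  · have : vv k (a :: b :: t) = - vv k (b :: a :: t) := by
      rw [vv_cons_cons, vv_cons_cons, ← lie_skew (of k a) (of k b), foldl_neg]
      exact Submodule.Quotient.mk_neg ((D2 k d).toSubmodule)
    rw [this]
    exact neg_mem (span_key_lt h t)

lemma LN_long_mem_D1 (a b : Fin d) (t : List (Fin d)) :
    leftNormedList ((a :: b :: t).map (of k)) ∈ D1 k d := by
  show (t.map (of k)).foldl (fun x y => ⁅x, y⁆) ⁅of k a, of k b⁆ ∈ D1 k d
  exact foldl_mem_D1 (bracket_mem_D1 _ _) _

lemma vv_append_mem (l : List (Fin d)) (hl : l ≠ []) (c : Fin d) :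
    vv k (l ++ [c]) ∈ SS k d := by
  rcases l with _ | ⟨a, _ | ⟨b, t⟩⟩
  · exact absurd rfl hl
  · exact span_key a c []
  · exact span_key a b (t ++ [c])

lemma vv_append_eq (l : List (Fin d)) (hl : l ≠ []) (c : Fin d) :
    vv k (l ++ [c]) = ⁅vv k l, vv k [c]⁆ := by
  rcases l with _ | ⟨a, rest⟩
  · exact absurd rfl hl
  · show LieSubmodule.Quotient.mk (N := D2 k d)
        (((rest ++ [c]).map (of k)).foldl (fun x y => ⁅x, y⁆) (of k a)) = _
    rw [List.map_append, List.foldl_append]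
    show LieSubmodule.Quotient.mk (N := D2 k d)
        ⁅(rest.map (of k)).foldl (fun x y => ⁅x, y⁆) (of k a), of k c⁆ = _
    rw [LieSubmodule.Quotient.mk_bracket]
    rfl

lemma lie_vv_vv_mem (l l' : List (Fin d)) (hl : l ≠ []) (hl' : l' ≠ []) :
    ⁅vv k l, vv k l'⁆ ∈ SS k d := by
  rcases l' with _ | ⟨c, _ | ⟨e, t'⟩⟩
  · exact absurd rfl hl'
  · rw [← vv_append_eq l hl c]
    exact vv_append_mem l hl c
  · rcases l with _ | ⟨a, _ | ⟨b, t⟩⟩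
    · exact absurd rfl hl
    · rw [show (⁅vv k [a], vv k (c :: e :: t')⁆ : Mq k d)
          = - ⁅vv k (c :: e :: t'), vv k [a]⁆ from (lie_skew _ _).symm]
      rw [← vv_append_eq _ (by simp) a]
      exact neg_mem (vv_append_mem _ (by simp) a)
    · have : (⁅vv k (a :: b :: t), vv k (c :: e :: t')⁆ : Mq k d) = 0 := by
        rw [show vv k (a :: b :: t) = LieSubmodule.Quotient.mk (N := D2 k d)
          (leftNormedList ((a :: b :: t).map (of k))) from rfl,
          show vv k (c :: e :: t') = LieSubmodule.Quotient.mk (N := D2 k d)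
          (leftNormedList ((c :: e :: t').map (of k))) from rfl,
          ← LieSubmodule.Quotient.mk_bracket]
        rw [show (LieSubmodule.Quotient.mk (N := D2 k d)
          ⁅leftNormedList ((a :: b :: t).map (of k)),
            leftNormedList ((c :: e :: t').map (of k))⁆)
          = LieSubmodule.Quotient.mk' (D2 k d)
          ⁅leftNormedList ((a :: b :: t).map (of k)),
            leftNormedList ((c :: e :: t').map (of k))⁆ from rfl]
        rw [LieSubmodule.Quotient.mk_eq_zero]
        exact mem_D2 (LN_long_mem_D1 a b t) (LN_long_mem_D1 c e t')
      rw [this]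
      exact zero_mem _

lemma SS_lie_closed {x y : Mq k d} (hx : x ∈ SS k d) (hy : y ∈ SS k d) :
    ⁅x, y⁆ ∈ SS k d := by
  induction hx, hy using Submodule.span_induction₂ with
  | mem_mem u v hu hv =>
    obtain ⟨⟨lu, hlu⟩, rfl⟩ := hu
    obtain ⟨⟨lv, hlv⟩, rfl⟩ := hv
    exact lie_vv_vv_mem lu lv hlu.1 hlv.1
  | zero_left y hy => rw [zero_lie]; exact zero_mem _
  | zero_right x hx => rw [lie_zero]; exact zero_mem _
  | add_left x y z hx hy hz h1 h2 => rw [add_lie]; exact add_mem h1 h2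
  | add_right x y z hx hy hz h1 h2 => rw [lie_add]; exact add_mem h1 h2
  | smul_left r x y hx hy h => rw [smul_lie]; exact Submodule.smul_mem _ r h
  | smul_right r x y hx hy h => rw [lie_smul]; exact Submodule.smul_mem _ r h

lemma lieSpan_of_eq_top :
    LieSubalgebra.lieSpan k (FreeLieAlgebra k (Fin d)) (Set.range (of k)) = ⊤ := by
  set A := LieSubalgebra.lieSpan k (FreeLieAlgebra k (Fin d)) (Set.range (of k)) with hA
  rw [eq_top_iff]
  intro x _
  let g : FreeLieAlgebra k (Fin d) →ₗ⁅k⁆ A :=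
    FreeLieAlgebra.lift k (fun a => ⟨of k a, LieSubalgebra.subset_lieSpan ⟨a, rfl⟩⟩)
  have hcomp : A.incl.comp g = LieHom.id := by
    apply FreeLieAlgebra.hom_ext
    intro a
    simp [g]
  have : A.incl (g x) = x := by
    have := LieHom.congr_fun hcomp x
    simpa using this
  rw [← this]
  exact (g x).2

lemma SS_eq_top : SS k d = ⊤ := by
  rw [eq_top_iff]
  rintro m -
  obtain ⟨x, rfl⟩ := LieSubmodule.Quotient.surjective_mk' (D2 k d) m
  have hx : x ∈ LieSubalgebra.lieSpan k (FreeLieAlgebra k (Fin d)) (Set.range (of k)) := by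
    rw [lieSpan_of_eq_top]; trivial
  refine LieSubalgebra.lieSpan_induction (R := k) (L := FreeLieAlgebra k (Fin d))
    (p := fun z _ => ((LieSubmodule.Quotient.mk' (D2 k d)).toLinearMap) z ∈ SS k d) (hx := hx)
    ?_ ?_ ?_ ?_ ?_
  · rintro z ⟨a, rfl⟩
    exact vv_mem_SS_of_adm (l := [a]) ⟨by simp, by simp [List.Chain'], fun h => by simp at h⟩
  · show ((LieSubmodule.Quotient.mk' (D2 k d)).toLinearMap) 0 ∈ SS k d
    rw [map_zero]; exact zero_mem _
  · intro z w _ _ hz hw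
    show ((LieSubmodule.Quotient.mk' (D2 k d)).toLinearMap) (z + w) ∈ SS k d
    rw [map_add]; exact add_mem hz hw
  · intro r z _ h
    show ((LieSubmodule.Quotient.mk' (D2 k d)).toLinearMap) (r • z) ∈ SS k d
    rw [map_smul]; exact Submodule.smul_mem _ r h
  · intro z w _ _ hz hw
    show LieSubmodule.Quotient.mk (N := D2 k d) ⁅z, w⁆ ∈ SS k d
    rw [LieSubmodule.Quotient.mk_bracket]
    exact SS_lie_closed hz hw

lemma main (k : Type*) [Field k] (d : ℕ) :
    ∃ b : Module.Basis {l : List (Fin d) // BokutAdmissible l} k (Mq k d),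
      ∀ l : {l : List (Fin d) // BokutAdmissible l}, b l = vv k l.1 := by
  have hsp : ⊤ ≤ Submodule.span k
      (Set.range (fun l : {l : List (Fin d) // BokutAdmissible l} => vv k l.1)) := by
    rw [show Submodule.span k _ = SS k d from rfl, SS_eq_top]
  exact ⟨Module.Basis.mk indep_vv hsp, fun l => Module.Basis.mk_apply _ _ _⟩

end FMB

/-- The left-normed monomials `[a₀, a₁, …, a_{n-1}]` (`aᵢ` generators, `n ≥ 1`)
with `a₀ > a₁ ≤ a₂ ≤ … ≤ a_{n-1}` form a basis of the free metabelian Lie algebra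
`M = L_X / L_X⁽²⁾` on `X = {x₁ < … < x_d}`. -/
theorem free_metabelian_basis (k : Type*) [Field k] (d : ℕ) :
    ∃ b : Module.Basis {l : List (Fin d) // BokutAdmissible l} k
        ((FreeLieAlgebra k (Fin d)) ⧸ (LieAlgebra.derivedSeries k (FreeLieAlgebra k (Fin d)) 2)),
      ∀ l : {l : List (Fin d) // BokutAdmissible l},
        b l = LieSubmodule.Quotient.mk
          (N := (LieAlgebra.derivedSeries k (FreeLieAlgebra k (Fin d)) 2))
          (leftNormedList ((l : List (Fin d)).map (FreeLieAlgebra.of k))) := by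
  obtain ⟨b, hb⟩ := FMB.main k d
  exact ⟨b, fun l => hb l⟩
end

section
/- The number of basis monomials of length m ≥ 3 in the free metabelian Lie algebra on d ordered generators equals ∑_{j=1}^{d-1} (d-j) · C(m-2+d-j, d-j), where C denotes the binomial coefficient. -/
set_option maxHeartbeats 1000000

private lemma monotone_cons' {L d : ℕ} (t : Fin d) (g : Fin L → Fin d) (hg : Monotone g)
    (ht : ∀ i, t ≤ g i) : Monotone (Fin.cons t g) := by
  intro a b hab
  induction a using Fin.cases with
  | zero =>
    rw [Fin.cons_zero]
    induction b using Fin.cases with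
    | zero => rw [Fin.cons_zero]
    | succ j => rw [Fin.cons_succ]; exact ht j
  | succ i =>
    induction b using Fin.cases with
    | zero => exact absurd hab (by simp [Fin.le_def])
    | succ j =>
      rw [Fin.cons_succ, Fin.cons_succ]
      exact hg (by rwa [Fin.succ_le_succ_iff] at hab)

private def shiftEquiv (L s : ℕ) :
    {f : Fin (L+1) → Fin (s+1) // Monotone f ∧ f 0 ≠ 0} ≃
      {f : Fin (L+1) → Fin s // Monotone f} where
  toFun f := ⟨fun i => ⟨(f.1 i).val - 1, by
      have h1 := f.2.1 (Fin.zero_le i)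
      have h2 : (f.1 0).val ≠ 0 := fun h => f.2.2 (Fin.ext h)
      have := (f.1 i).isLt
      rw [Fin.le_def] at h1; omega⟩, by
    intro a b hab
    have := f.2.1 hab
    rw [Fin.le_def] at *
    simpa using by omega⟩
  invFun f := ⟨fun i => ⟨(f.1 i).val + 1, by have := (f.1 i).isLt; omega⟩, by
      intro a b hab
      have := f.2 hab
      rw [Fin.le_def] at *
      simpa using by omega, by
    intro h
    exact (Nat.succ_ne_zero _) (congrArg Fin.val h)⟩
  left_inv := by
    rintro ⟨f, hf, h0⟩
    refine Subtype.ext (funext fun i => Fin.ext ?_)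
    have h1 := hf (Fin.zero_le i)
    have h2 : (f 0).val ≠ 0 := fun h => h0 (Fin.ext h)
    rw [Fin.le_def] at h1
    simpa using by omega
  right_inv := by
    rintro ⟨f, hf⟩
    exact Subtype.ext (funext fun i => Fin.ext (by simp))

private def tailEquiv (L s : ℕ) :
    {f : Fin (L+1) → Fin (s+1) // Monotone f ∧ f 0 = 0} ≃
      {f : Fin L → Fin (s+1) // Monotone f} where
  toFun f := ⟨fun i => f.1 i.succ, fun a b hab => f.2.1 (by rwa [Fin.succ_le_succ_iff])⟩
  invFun g := ⟨Fin.cons 0 g.1, monotone_cons' 0 g.1 g.2 (fun i => Fin.zero_le _), Fin.cons_zero _ _⟩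
  left_inv := by
    rintro ⟨f, hf, h0⟩
    refine Subtype.ext (funext fun i => ?_)
    induction i using Fin.cases with
    | zero => simpa using h0.symm
    | succ j => simp
  right_inv := by
    rintro ⟨g, hg⟩
    exact Subtype.ext (funext fun i => by simp)

private lemma card_mono : ∀ L s : ℕ,
    Fintype.card {f : Fin L → Fin s // Monotone f} = Nat.multichoose s L
  | 0, s => by
    rw [Nat.multichoose_zero_right]
    refine Fintype.card_eq_one_iff.mpr ⟨⟨fun i => i.elim0, fun a => a.elim0⟩, fun y => ?_⟩
    exact Subtype.ext (funext fun i => i.elim0)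
  | (L+1), 0 => by
    rw [Nat.multichoose_zero_succ]
    exact Fintype.card_eq_zero_iff.mpr ⟨fun ⟨f, _⟩ => (f 0).elim0⟩
  | (L+1), (s+1) => by
    classical
    rw [Nat.multichoose_succ_succ]
    have e1 := Equiv.subtypeSubtypeEquivSubtypeInter
      (fun f : Fin (L+1) → Fin (s+1) => Monotone f) (fun f => f 0 ≠ 0)
    have e2 := Equiv.subtypeSubtypeEquivSubtypeInter
      (fun f : Fin (L+1) → Fin (s+1) => Monotone f) (fun f => f 0 = 0)
    have hsplit : Fintype.card {f : Fin (L+1) → Fin (s+1) // Monotone f}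
        = Fintype.card {f : Fin (L+1) → Fin (s+1) // Monotone f ∧ f 0 ≠ 0}
          + Fintype.card {f : Fin (L+1) → Fin (s+1) // Monotone f ∧ f 0 = 0} := by
      rw [← Fintype.card_congr e1, ← Fintype.card_congr e2, ← Fintype.card_sum]
      refine (Fintype.card_congr ?_).symm
      exact ((Equiv.sumCongr (Equiv.refl _)
        (Equiv.subtypeEquivRight (fun (x : {f : Fin (L+1) → Fin (s+1) // Monotone f}) => (not_not (a := x.1 0 = 0)).symm))).trans
        (Equiv.sumCompl (fun x : {f : Fin (L+1) → Fin (s+1) // Monotone f} => x.1 0 ≠ 0)))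
    rw [hsplit, Fintype.card_congr (shiftEquiv L s), Fintype.card_congr (tailEquiv L s),
      card_mono (L+1) s, card_mono L (s+1)]


private def fixEquiv (n d : ℕ) (t : Fin d) :
    {g : Fin (n+1) → Fin d // Monotone g ∧ g 0 = t} ≃
      {h : Fin n → Fin (d - t) // Monotone h} where
  toFun g := ⟨fun i => ⟨(g.1 i.succ).val - t.val, by
      have h1 : t ≤ g.1 i.succ := le_of_le_of_eq (le_of_eq g.2.2.symm) rfl |>.trans (g.2.1 (Fin.zero_le _))
      have h2 := (g.1 i.succ).isLt
      rw [Fin.le_def] at h1; omega⟩, by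
    intro a b hab
    have := g.2.1 (Fin.succ_le_succ_iff.mpr hab)
    rw [Fin.le_def] at *
    simpa using by omega⟩
  invFun h := ⟨Fin.cons t (fun i => ⟨t.val + (h.1 i).val, by have := (h.1 i).isLt; omega⟩),
    monotone_cons' _ _ (by
      intro a b hab
      have := h.2 hab
      rw [Fin.le_def] at *
      simpa using by omega)
      (fun i => by rw [Fin.le_def]; simp), Fin.cons_zero _ _⟩
  left_inv := by
    rintro ⟨g, hg, hg0⟩
    refine Subtype.ext (funext fun i => ?_)
    induction i using Fin.cases with
    | zero => simpa using hg0.symm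
    | succ j =>
      have h1 : t ≤ g j.succ := hg0 ▸ hg (Fin.zero_le _)
      rw [Fin.le_def] at h1
      simp only [Fin.cons_succ]
      exact Fin.ext (by simpa using by omega)
  right_inv := by
    rintro ⟨h, hh⟩
    refine Subtype.ext (funext fun i => Fin.ext ?_)
    simp

theorem card_fix (n d : ℕ) (t : Fin d) :
    Fintype.card {g : Fin (n+1) → Fin d // Monotone g ∧ g 0 = t}
      = Nat.multichoose (d - t) n := by
  classical
  rw [Fintype.card_congr (fixEquiv n d t), card_mono]


private def splitEquiv (n d : ℕ) (t : Fin d) :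
    {f : Fin (n+3) → Fin d //
        (f ⟨1, by omega⟩ < f ⟨0, by omega⟩ ∧
          ∀ i j : Fin (n+3), 1 ≤ (i : ℕ) → i ≤ j → f i ≤ f j) ∧ f ⟨1, by omega⟩ = t} ≃
      {a : Fin d // t < a} × {g : Fin (n+2) → Fin d // Monotone g ∧ g 0 = t} where
  toFun f := (⟨f.1 ⟨0, by omega⟩, lt_of_le_of_lt (le_of_eq f.2.2.symm) f.2.1.1⟩,
    ⟨fun i => f.1 i.succ, by
      intro a b hab
      exact f.2.1.2 a.succ b.succ (by simp) (Fin.succ_le_succ_iff.mpr hab),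
      (congrArg f.1 (Fin.ext (by simp))).trans f.2.2⟩)
  invFun p := ⟨Fin.cons p.1.1 p.2.1, ⟨by
      have h1 : (⟨1, by omega⟩ : Fin (n+3)) = Fin.succ 0 := Fin.ext (by simp)
      have h0 : (⟨0, by omega⟩ : Fin (n+3)) = 0 := Fin.ext (by simp)
      rw [h1, h0, Fin.cons_succ, Fin.cons_zero, p.2.2.2]
      exact p.1.2, by
      intro i j hi hij
      induction i using Fin.cases with
      | zero => simp at hi
      | succ i =>
        induction j using Fin.cases with
        | zero => exact absurd hij (by simp [Fin.le_def])
        | succ j =>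
          rw [Fin.cons_succ, Fin.cons_succ]
          exact p.2.2.1 (Fin.succ_le_succ_iff.mp hij)⟩, by
    have h1 : (⟨1, by omega⟩ : Fin (n+3)) = Fin.succ 0 := Fin.ext (by simp)
    rw [h1, Fin.cons_succ, p.2.2.2]⟩
  left_inv := by
    rintro ⟨f, hf⟩
    refine Subtype.ext (funext fun i => ?_)
    induction i using Fin.cases with
    | zero => simpa using congrArg f (Fin.ext (by simp))
    | succ j => simp
  right_inv := by
    rintro ⟨⟨a, ha⟩, ⟨g, hg, hg0⟩⟩
    refine Prod.ext (Subtype.ext ?_) (Subtype.ext (funext fun i => ?_))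
    · have h0 : (⟨0, by omega⟩ : Fin (n+3)) = 0 := Fin.ext (by simp)
      simp only [h0, Fin.cons_zero]
    · simp

private lemma sum_arith (n e : ℕ) :
    ∑ t : Fin (e+1), (e - ↑t) * Nat.multichoose (e + 1 - ↑t) (n+1)
      = ∑ j ∈ Finset.Icc 1 (e + 1 - 1), (e + 1 - j) * Nat.choose (n + 3 - 2 + (e+1) - j) (e + 1 - j) := by
  have hfin := Fin.sum_univ_eq_sum_range (fun x => (e - x) * Nat.multichoose (e + 1 - x) (n+1)) (e+1)
  rw [hfin, Finset.sum_range_succ]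
  simp only [Nat.sub_self, zero_mul, add_zero]
  have hIcc : e + 1 - 1 = e := by omega
  rw [hIcc, ← Finset.Ico_add_one_right_eq_Icc, Finset.sum_Ico_eq_sum_range]
  rw [(by omega : e + 1 - 1 = e)]
  refine Finset.sum_congr rfl fun i hi => ?_
  rw [Finset.mem_range] at hi
  rw [Nat.multichoose_eq]
  have h2 : e + 1 - i + (n+1) - 1 = n + 1 + e - i := by omega
  have h3 : n + 3 - 2 + (e+1) - (1+i) = n + 1 + e - i := by omega
  have h4 : e + 1 - (1 + i) = e - i := by omega
  rw [h2, h3, h4]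
  congr 1
  rw [← Nat.choose_symm (by omega : e - i ≤ n + 1 + e - i)]
  congr 1
  omega

/-- The number of Bokut basis monomials `[a₀, a₁, …, a_{m-1}]` of length `m ≥ 3`
in the free metabelian Lie algebra on `d` ordered generators — i.e. of tuples
over `Fin d` with `a₀ > a₁ ≤ a₂ ≤ … ≤ a_{m-1}` — equals
`∑_{j=1}^{d-1} (d-j) · C(m-2+d-j, d-j)`. -/
theorem count_bokut_monomials (d m : ℕ) (hm : 3 ≤ m) :
    Fintype.card {f : Fin m → Fin d //
        f ⟨1, by omega⟩ < f ⟨0, by omega⟩ ∧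
        ∀ i j : Fin m, 1 ≤ (i : ℕ) → i ≤ j → f i ≤ f j} =
      ∑ j ∈ Finset.Icc 1 (d - 1), (d - j) * Nat.choose (m - 2 + d - j) (d - j) := by
  classical
  obtain ⟨n, rfl⟩ : ∃ n, m = n + 3 := ⟨m - 3, by omega⟩
  rcases Nat.eq_zero_or_pos d with rfl | hd
  · rw [Fintype.card_eq_zero_iff.mpr ⟨fun f => (f.1 ⟨0, by omega⟩).elim0⟩]
    simp
  obtain ⟨e, rfl⟩ : ∃ e, d = e + 1 := ⟨d - 1, by omega⟩
  have hlt : (1:ℕ) < n + 3 := by omega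
  have h0lt : (0:ℕ) < n + 3 := by omega
  have step2 : ∀ t : Fin (e+1),
      Fintype.card {f : Fin (n+3) → Fin (e+1) // (f ⟨1, hlt⟩ < f ⟨0, h0lt⟩ ∧ ∀ i j : Fin (n+3), 1 ≤ (i : ℕ) → i ≤ j → f i ≤ f j) ∧ f ⟨1, hlt⟩ = t}
        = (e - t) * Nat.multichoose (e + 1 - t) (n+1) := by
    intro t
    rw [Fintype.card_congr (splitEquiv n (e+1) t), Fintype.card_prod, card_fix (n+1) (e+1) t]
    congr 1
    rw [Fintype.card_subtype]
    have h5 : (Finset.univ.filter fun a : Fin (e+1) => t < a) = Finset.Ioi t :=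
      Finset.filter_lt_eq_Ioi
    rw [h5, Fin.card_Ioi]
    omega
  have step1 : Fintype.card {f : Fin (n+3) → Fin (e+1) // f ⟨1, hlt⟩ < f ⟨0, h0lt⟩ ∧ ∀ i j : Fin (n+3), 1 ≤ (i : ℕ) → i ≤ j → f i ≤ f j}
      = ∑ t : Fin (e+1), Fintype.card {f : Fin (n+3) → Fin (e+1) // (f ⟨1, hlt⟩ < f ⟨0, h0lt⟩ ∧ ∀ i j : Fin (n+3), 1 ≤ (i : ℕ) → i ≤ j → f i ≤ f j) ∧ f ⟨1, hlt⟩ = t} := by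
    have E := Fintype.card_congr (Equiv.sigmaFiberEquiv
      (fun f : {f : Fin (n+3) → Fin (e+1) // f ⟨1, hlt⟩ < f ⟨0, h0lt⟩ ∧ ∀ i j : Fin (n+3), 1 ≤ (i : ℕ) → i ≤ j → f i ≤ f j} => f.1 ⟨1, hlt⟩))
    rw [← E, Fintype.card_sigma]
    exact Finset.sum_congr rfl fun t _ => Fintype.card_congr
      (Equiv.subtypeSubtypeEquivSubtypeInter (fun f : Fin (n+3) → Fin (e+1) => f ⟨1, hlt⟩ < f ⟨0, h0lt⟩ ∧ ∀ i j : Fin (n+3), 1 ≤ (i : ℕ) → i ≤ j → f i ≤ f j) (fun f => f ⟨1, hlt⟩ = t))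
  rw [step1]
  have hsum : ∑ t : Fin (e+1), Fintype.card {f : Fin (n+3) → Fin (e+1) // (f ⟨1, hlt⟩ < f ⟨0, h0lt⟩ ∧ ∀ i j : Fin (n+3), 1 ≤ (i : ℕ) → i ≤ j → f i ≤ f j) ∧ f ⟨1, hlt⟩ = t}
      = ∑ t : Fin (e+1), (e - ↑t) * Nat.multichoose (e + 1 - ↑t) (n+1) :=
    Finset.sum_congr rfl fun t _ => step2 t
  rw [hsum]
  exact sum_arith n e
end

section
/- Let L be a Lie algebra over a field of characteristic ≠ 2, and let a, b, t, u ∈ L satisfy [a,b] = 0, [[a,t],b] = 0, [[b,t],a] = 0, [t,u] = 0, [a,u] = [[a,t],t], and [b,u] = [[b,t],t]. Writing a_i = [a, t, …, t] (i copies of t, left-normed) and b_j = [b, t, …, t], one has [a_1, b_1] = 0. -/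
/-- Base case of Baumslag's Lemma 5: under the given relations, `[a₁, b₁] = 0`,
i.e. `[[a,t],[b,t]] = 0`, in a Lie algebra over a field of characteristic ≠ 2. -/
theorem baumslag_base_case (k : Type*) (L : Type*) [Field k] (hchar : (2 : k) ≠ 0)
    [LieRing L] [LieAlgebra k L] (a b t u : L)
    (h1 : ⁅a, b⁆ = 0) (h2 : ⁅⁅a, t⁆, b⁆ = 0) (h3 : ⁅⁅b, t⁆, a⁆ = 0)
    (h4 : ⁅t, u⁆ = 0) (h5 : ⁅a, u⁆ = ⁅⁅a, t⁆, t⁆) (h6 : ⁅b, u⁆ = ⁅⁅b, t⁆, t⁆) :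
    ⁅⁅a, t⁆, ⁅b, t⁆⁆ = 0 := by
  have e1 : ⁅⁅a, t⁆, ⁅b, t⁆⁆ = ⁅a, ⁅⁅b, t⁆, t⁆⁆ := by
    have := leibniz_lie (⁅a, t⁆) b t
    have h' : ⁅⁅a, t⁆, ⁅b, t⁆⁆ = ⁅⁅⁅a,t⁆, b⁆, t⁆ + ⁅b, ⁅⁅a,t⁆, t⁆⁆ := this
    rw [h2, zero_lie, zero_add, ← h5] at h'
    have h'' : ⁅b, ⁅a, u⁆⁆ = ⁅⁅b, a⁆, u⁆ + ⁅a, ⁅b, u⁆⁆ := leibniz_lie b a u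
    have hba : ⁅b, a⁆ = (0:L) := by rw [← lie_skew, h1, neg_zero]
    rw [hba, zero_lie, zero_add, h6] at h''
    rw [h', h'']
  have e2 : ⁅⁅a, t⁆, ⁅b, t⁆⁆ = -⁅a, ⁅⁅b, t⁆, t⁆⁆ := by
    have h' : ⁅⁅b, t⁆, ⁅a, t⁆⁆ = ⁅⁅⁅b,t⁆, a⁆, t⁆ + ⁅a, ⁅⁅b,t⁆, t⁆⁆ := leibniz_lie (⁅b,t⁆) a t
    rw [h3, zero_lie, zero_add] at h'
    rw [← lie_skew, h']
  have h2x : (2 : k) • ⁅⁅a, t⁆, ⁅b, t⁆⁆ = 0 := by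
    rw [two_smul]
    nth_rewrite 1 [e1]
    rw [e2]; abel
  rcases smul_eq_zero.mp h2x with h | h
  · exact absurd h hchar
  · exact h
end

section
/- Let L be a Lie algebra over a field of characteristic ≠ 2, and let a, b, t, u ∈ L satisfy [a,b] = 0, [[a,t],b] = 0, [[b,t],a] = 0, [t,u] = 0, [a,u] = [[a,t],t], and [b,u] = [[b,t],t]. Then [a_i, b_j] = 0 for all i, j ≥ 0, where a_i = [a, t, …, t] (i copies of t, left-normed) and b_j = [b, t, …, t] (j copies of t). -/
/-- Lemma 5 of Baumslag (1977): with `aᵢ = [a,t,…,t]` (`i` copies of `t`, left-normed)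
and `bⱼ = [b,t,…,t]`, under the given relations one has `[aᵢ, bⱼ] = 0` for all
`i, j ≥ 0`, in a Lie algebra over a field of characteristic ≠ 2. -/
theorem baumslag_lemma5 (k : Type*) (L : Type*) [Field k] (hchar : (2 : k) ≠ 0)
    [LieRing L] [LieAlgebra k L] (a b t u : L)
    (h1 : ⁅a, b⁆ = 0) (h2 : ⁅⁅a, t⁆, b⁆ = 0) (h3 : ⁅⁅b, t⁆, a⁆ = 0)
    (h4 : ⁅t, u⁆ = 0) (h5 : ⁅a, u⁆ = ⁅⁅a, t⁆, t⁆) (h6 : ⁅b, u⁆ = ⁅⁅b, t⁆, t⁆) :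
    ∀ i j : ℕ, ⁅(fun x => ⁅x, t⁆)^[i] a, (fun x => ⁅x, t⁆)^[j] b⁆ = 0 := by
  set A : ℕ → L := fun i => (fun x => ⁅x, t⁆)^[i] a with hA
  set B : ℕ → L := fun j => (fun x => ⁅x, t⁆)^[j] b with hB
  have keyg : ∀ x y z : L, ⁅⁅x, y⁆, z⁆ = ⁅⁅x, z⁆, y⁆ + ⁅x, ⁅y, z⁆⁆ := by
    intro x y z
    rw [lie_lie, ← lie_skew y ⁅x, z⁆]
    abel
  have hAs : ∀ i, A (i + 1) = ⁅A i, t⁆ := fun i => Function.iterate_succ_apply' _ i a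
  have hBs : ∀ j, B (j + 1) = ⁅B j, t⁆ := fun j => Function.iterate_succ_apply' _ j b
  have hA0 : A 0 = a := rfl
  have hB0 : B 0 = b := rfl
  have hAu : ∀ i, ⁅A i, u⁆ = A (i + 2) := by
    intro i
    induction i with
    | zero => rw [hA0, h5, show A 2 = ⁅⁅A 0, t⁆, t⁆ by rw [← hAs, ← hAs], hA0]
    | succ n ih =>
      rw [hAs n, keyg, h4, lie_zero, add_zero, ih, ← hAs]
  have hBu : ∀ j, ⁅B j, u⁆ = B (j + 2) := by
    intro j
    induction j with
    | zero => rw [hB0, h6, show B 2 = ⁅⁅B 0, t⁆, t⁆ by rw [← hBs, ← hBs], hB0]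
    | succ n ih =>
      rw [hBs n, keyg, h4, lie_zero, add_zero, ih, ← hBs]
  have main : ∀ n, ∀ i j : ℕ, i + j = n → ⁅A i, B j⁆ = 0 := by
    intro n
    induction n using Nat.strong_induction_on with
    | _ n ih =>
      match n with
      | 0 =>
        intro i j hij
        obtain rfl : i = 0 := by omega
        obtain rfl : j = 0 := by omega
        rw [hA0, hB0]; exact h1
      | 1 =>
        intro i j hij
        rcases (by omega : i = 0 ∨ i = 1) with rfl | rfl
        · obtain rfl : j = 1 := by omega
          rw [hA0, hBs, hB0, ← lie_skew, h3, neg_zero]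
        · obtain rfl : j = 0 := by omega
          rw [hB0, hAs, hA0]; exact h2
      | (n + 2) =>
        have hcn : ∀ i j : ℕ, i + j = n → ⁅A i, B j⁆ = 0 :=
          fun i j h => ih n (by omega) i j h
        have hcn1 : ∀ i j : ℕ, i + j = n + 1 → ⁅A i, B j⁆ = 0 :=
          fun i j h => ih (n + 1) (by omega) i j h
        have hstep : ∀ i j : ℕ, i + j = n + 1 → ⁅A (i + 1), B j⁆ = -⁅A i, B (j + 1)⁆ := by
          intro i j hij
          have h0 : ⁅⁅A i, B j⁆, t⁆ = 0 := by rw [hcn1 i j hij, zero_lie]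
          rw [keyg, ← hAs, ← hBs] at h0
          exact eq_neg_of_add_eq_zero_left h0
        have hz2 : ∀ i j : ℕ, i + j = n → ⁅A (i + 2), B j⁆ = 0 := by
          intro i j hij
          have hu : ⁅⁅A i, B j⁆, u⁆ = 0 := by rw [hcn i j hij, zero_lie]
          rw [keyg, hAu, hBu] at hu
          have he : ⁅A (i + 2), B j⁆ = ⁅A i, B (j + 2)⁆ := by
            rw [show i + 2 = (i + 1) + 1 from rfl, hstep (i + 1) j (by omega),
              hstep i (j + 1) (by omega), neg_neg]
          rw [← he] at hu
          have h2x : (2 : k) • ⁅A (i + 2), B j⁆ = 0 := by rw [two_smul]; exact hu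
          have := congrArg (fun x => (2 : k)⁻¹ • x) h2x
          simpa [inv_smul_smul₀ hchar] using this
        intro i j hij
        match i with
        | 0 =>
          obtain rfl : j = n + 2 := by omega
          have h1' : ⁅A 1, B (n + 1)⁆ = -⁅A 0, B (n + 2)⁆ := hstep 0 (n + 1) (by omega)
          have h2' : ⁅A 2, B n⁆ = -⁅A 1, B (n + 1)⁆ := hstep 1 n (by omega)
          have h3' : ⁅A 2, B n⁆ = 0 := hz2 0 n (by omega)
          rw [h3'] at h2'
          have h4' : ⁅A 1, B (n + 1)⁆ = 0 := neg_eq_zero.mp h2'.symm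
          rw [h1'] at h4'
          exact neg_eq_zero.mp h4'
        | 1 =>
          obtain rfl : j = n + 1 := by omega
          have h2' : ⁅A 2, B n⁆ = -⁅A 1, B (n + 1)⁆ := hstep 1 n (by omega)
          have h3' : ⁅A 2, B n⁆ = 0 := hz2 0 n (by omega)
          rw [h3'] at h2'
          exact neg_eq_zero.mp h2'.symm
        | (m + 2) =>
          exact hz2 m j (by omega)
  exact fun i j => main (i + j) i j rfl
end
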